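/- Let f(q) = ∑_{n=0}^∞ qⁿ aₙ and g(q) = ∑_{n=0}^∞ qⁿ bₙ be convergent quaternionic power series on 𝔹⁴ such that the vector parts {Im(bₙ) : n ≥ 0} span ℝ³. Suppose there exist distinct non-antipodal i, i' ∈ 𝕊², orthogonal complements j ⊥ i, j' ⊥ i', and constants c ∈ ℂ(i), c' ∈ ℂ(i') with 2f = (1+c)g + i(1−c)g i on ℂ(i) ∩ 𝔹⁴ and 2f = (1+c')g + i'(1−c')g i' on ℂ(i') ∩ 𝔹⁴. Then f = g on 𝔹⁴. -/

import Mathlib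

open Quaternion


lemma coeff_zero (e : ℕ → ℍ[ℝ])
    (hs : Summable fun n : ℕ => ‖e n‖ * (2⁻¹ : ℝ) ^ n)
    (h0 : ∀ x : ℝ, |x| < 2⁻¹ → ∑' n : ℕ, x ^ n • e n = 0) : ∀ n, e n = 0 := by
  set p : FormalMultilinearSeries ℝ ℝ ℍ[ℝ] :=
    fun n => ContinuousMultilinearMap.mkPiRing ℝ (Fin n) (e n) with hp
  have hrad : ((2⁻¹ : NNReal) : ENNReal) ≤ p.radius := by
    apply p.le_radius_of_summable_norm
    simpa [hp, ContinuousMultilinearMap.norm_mkPiRing] using hs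
  have hball : HasFPowerSeriesOnBall (fun x : ℝ => ∑' n : ℕ, x ^ n • e n) p 0 (2⁻¹ : NNReal) := by
    refine ⟨hrad, by simp, ?_⟩
    intro y hy
    simp only [EMetric.mem_ball, edist_zero_right] at hy
    have hy' : |y| < 2⁻¹ := by
      have h2 := ENNReal.coe_lt_coe.mp hy
      rw [← NNReal.coe_lt_coe] at h2
      simpa [Real.norm_eq_abs] using h2
    have hsum : Summable fun n : ℕ => y ^ n • e n := by
      apply Summable.of_norm
      apply Summable.of_nonneg_of_le (fun n => norm_nonneg _) _ hs
      intro n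
      rw [norm_smul, norm_pow, Real.norm_eq_abs, mul_comm]
      exact mul_le_mul_of_nonneg_left (pow_le_pow_left₀ (abs_nonneg _) hy'.le n) (norm_nonneg _)
    have : (fun n : ℕ => p n fun _ => y) = fun n : ℕ => y ^ n • e n := by
      funext n
      simp [hp, ContinuousMultilinearMap.mkPiRing_apply]
    rw [this, zero_add]
    exact hsum.hasSum
  have hat : HasFPowerSeriesAt (fun x : ℝ => ∑' n : ℕ, x ^ n • e n) p 0 := ⟨_, hball⟩
  have hev : (fun x : ℝ => ∑' n : ℕ, x ^ n • e n) =ᶠ[nhds 0] 0 := by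
    filter_upwards [Metric.ball_mem_nhds (0 : ℝ) (by norm_num : (0:ℝ) < 2⁻¹)] with x hx
    exact h0 x (by simpa [Real.dist_eq] using hx)
  have := hat.eq_zero_of_eventually hev
  intro n
  have h1 : p n (fun _ => (1:ℝ)) = 0 := by rw [this]; simp
  simpa [hp, ContinuousMultilinearMap.mkPiRing_apply] using h1


-- squared norm components
lemma imsq (p : ℍ[ℝ]) (hp : p.re = 0) (hn : ‖p‖ = 1) :
    p.imI ^ 2 + p.imJ ^ 2 + p.imK ^ 2 = 1 := by
  have h : normSq p = 1 := by
    rw [Quaternion.normSq_eq_norm_mul_self, hn]; norm_num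
  rw [Quaternion.normSq_def'] at h
  rw [hp] at h
  linarith [h]

lemma sq_neg_one (p : ℍ[ℝ]) (hp : p.re = 0) (hn : ‖p‖ = 1) : p * p = -1 := by
  have h := imsq p hp hn
  ext
  · simp [Quaternion.re_mul, hp]; linarith
  · simp [Quaternion.imI_mul, hp]; ring
  · simp [Quaternion.imJ_mul, hp]; ring
  · simp [Quaternion.imK_mul, hp]; ring

lemma re_mul_comm (x y : ℍ[ℝ]) : (x * y).re = (y * x).re := by
  simp only [Quaternion.re_mul]; ring

lemma lin_indep (i i' : ℍ[ℝ]) (hni : ‖i‖ = 1) (hni' : ‖i'‖ = 1)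
    (hne : i ≠ i') (hne' : i ≠ -i') (s t : ℝ) (h : s • i = t • i') :
    s = 0 ∧ t = 0 := by
  have hi'0 : i' ≠ 0 := by intro h0; rw [h0] at hni'; simp at hni'
  rcases eq_or_ne s 0 with hs | hs
  · refine ⟨hs, ?_⟩
    rw [hs, zero_smul] at h
    rcases smul_eq_zero.mp h.symm with h1 | h1
    · exact h1
    · exact absurd h1 hi'0
  · exfalso
    have hi : i = (s⁻¹ * t) • i' := by
      rw [mul_smul, ← h, smul_smul, inv_mul_cancel₀ hs, one_smul]
    have hnorm : |s⁻¹ * t| = 1 := by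
      have : ‖i‖ = |s⁻¹ * t| * ‖i'‖ := by rw [hi, norm_smul, Real.norm_eq_abs]
      rw [hni, hni'] at this; linarith
    rcases abs_eq (by norm_num : (0:ℝ) ≤ 1) |>.mp hnorm with h1 | h1
    · rw [h1, one_smul] at hi; exact hne hi
    · rw [h1, neg_one_smul] at hi; exact hne' hi

lemma comm_lemma (p q : ℍ[ℝ]) (hp : p.re = 0) (hn : ‖p‖ = 1)
    (hcomm : p * q = q * p) :
    q = ((q.re : ℝ) : ℍ[ℝ]) + (q.imI * p.imI + q.imJ * p.imJ + q.imK * p.imK) • p := by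
  have h1 := imsq p hp hn
  have cI := congrArg QuaternionAlgebra.imI hcomm
  have cJ := congrArg QuaternionAlgebra.imJ hcomm
  have cK := congrArg QuaternionAlgebra.imK hcomm
  simp only [Quaternion.imI_mul, Quaternion.imJ_mul, Quaternion.imK_mul, hp] at cI cJ cK
  have c1 : p.imJ * q.imK = p.imK * q.imJ := by linear_combination cI / 2
  have c2 : p.imK * q.imI = p.imI * q.imK := by linear_combination cJ / 2
  have c3 : p.imI * q.imJ = p.imJ * q.imI := by linear_combination cK / 2
  ext
  · simp [hp]
  · simp only [Quaternion.imI_add, Quaternion.imI_coe, Quaternion.imI_smul, zero_add,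
      smul_eq_mul]
    linear_combination (-q.imI) * h1 - p.imJ * c3 + p.imK * c2
  · simp only [Quaternion.imJ_add, Quaternion.imJ_coe, Quaternion.imJ_smul, zero_add,
      smul_eq_mul]
    linear_combination (-q.imJ) * h1 + p.imI * c3 - p.imK * c1
  · simp only [Quaternion.imK_add, Quaternion.imK_coe, Quaternion.imK_smul, zero_add,
      smul_eq_mul]
    linear_combination (-q.imK) * h1 - p.imI * c2 + p.imJ * c1


lemma kill (b : ℕ → ℍ[ℝ])
    (hspan : ∀ x : ℍ[ℝ], x.re = 0 →
      x ∈ Submodule.span ℝ (Set.range fun n : ℕ => (b n).im))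
    (ξ : ℍ[ℝ]) (hre : ξ.re = 0) (hx : ξ ≠ 0)
    (hv : ∀ n, (b n * ξ).re = 0) : False := by
  let f : ℍ[ℝ] →ₗ[ℝ] ℝ :=
    { toFun := fun q => (q * ξ).re
      map_add' := by intro x y; simp [add_mul]
      map_smul' := by intro r x; simp [smul_mul_assoc] }
  have hmem : ∀ x ∈ Set.range fun n : ℕ => (b n).im, f x = 0 := by
    rintro x ⟨n, rfl⟩
    have : f ((b n).im) = f (b n) - (b n).re * ξ.re := by
      have h1 : ((b n).re : ℍ[ℝ]) + (b n).im = b n := Quaternion.re_add_im (b n)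
      have h2 : f (((b n).re : ℍ[ℝ]) + (b n).im) = f (b n) := by rw [h1]
      rw [map_add] at h2
      have h3 : f (((b n).re : ℍ[ℝ])) = (b n).re * ξ.re := by
        simp only [f, LinearMap.coe_mk, AddHom.coe_mk, Quaternion.coe_mul_eq_smul]
        simp
      linarith [h2, h3]
    rw [this, hre]
    simp only [f, LinearMap.coe_mk, AddHom.coe_mk]
    rw [hv n]; ring
  have hz : f ξ = 0 := by
    have h := hspan ξ hre
    refine Submodule.span_induction hmem (by simp) (fun x y _ _ hx hy => by
      rw [map_add, hx, hy, add_zero]) (fun r x _ hx => by rw [map_smul, hx, smul_zero]) h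
  have hexp : (ξ * ξ).re = 0 := hz
  rw [Quaternion.re_mul, hre] at hexp
  apply hx
  ext
  · exact hre
  · show ξ.imI = (0 : ℍ[ℝ]).imI
    simp only [Quaternion.imI_zero]
    nlinarith [hexp, sq_nonneg ξ.imI, sq_nonneg ξ.imJ, sq_nonneg ξ.imK]
  · show ξ.imJ = (0 : ℍ[ℝ]).imJ
    simp only [Quaternion.imJ_zero]
    nlinarith [hexp, sq_nonneg ξ.imI, sq_nonneg ξ.imJ, sq_nonneg ξ.imK]
  · show ξ.imK = (0 : ℍ[ℝ]).imK
    simp only [Quaternion.imK_zero]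
    nlinarith [hexp, sq_nonneg ξ.imI, sq_nonneg ξ.imJ, sq_nonneg ξ.imK]

lemma coeff_ident (a b : ℕ → ℍ[ℝ])
    (ha : ∀ r : ℝ, 0 ≤ r → r < 1 → Summable fun n : ℕ => ‖a n‖ * r ^ n)
    (hb : ∀ r : ℝ, 0 ≤ r → r < 1 → Summable fun n : ℕ => ‖b n‖ * r ^ n)
    (i c : ℍ[ℝ])
    (h : ∀ x y : ℝ, ‖(x : ℍ[ℝ]) + (y : ℍ[ℝ]) * i‖ < 1 →
      2 * (∑' n : ℕ, ((x : ℍ[ℝ]) + (y : ℍ[ℝ]) * i) ^ n * a n) =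
        (1 + c) * (∑' n : ℕ, ((x : ℍ[ℝ]) + (y : ℍ[ℝ]) * i) ^ n * b n) +
        i * ((1 - c) * (∑' n : ℕ, ((x : ℍ[ℝ]) + (y : ℍ[ℝ]) * i) ^ n * b n)) * i) :
    ∀ n, 2 * a n = (1 + c) * b n + i * ((1 - c) * b n) * i := by
  set e : ℕ → ℍ[ℝ] := fun n => 2 * a n - ((1 + c) * b n + i * ((1 - c) * b n) * i) with he
  have key : ∀ n, e n = 0 := by
    apply coeff_zero e
    · -- summability of majorant
      have hsa := ha 2⁻¹ (by norm_num) (by norm_num)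
      have hsb := hb 2⁻¹ (by norm_num) (by norm_num)
      refine Summable.of_nonneg_of_le (fun n => by positivity) (fun n => ?_)
        ((hsa.mul_left ‖(2 : ℍ[ℝ])‖).add (hsb.mul_left (‖1 + c‖ + ‖i‖ * ‖1 - c‖ * ‖i‖)))
      · 
        have h1 : ‖e n‖ ≤ ‖(2:ℍ[ℝ])‖ * ‖a n‖ + (‖1 + c‖ + ‖i‖ * ‖1 - c‖ * ‖i‖) * ‖b n‖ := by
          rw [he]
          refine (norm_sub_le _ _).trans ?_
          have h2 : ‖(2:ℍ[ℝ]) * a n‖ ≤ ‖(2:ℍ[ℝ])‖ * ‖a n‖ := norm_mul_le _ _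
          have h3 : ‖(1 + c) * b n + i * ((1 - c) * b n) * i‖ ≤
              ‖1 + c‖ * ‖b n‖ + ‖i‖ * ‖1 - c‖ * ‖i‖ * ‖b n‖ := by
            refine (norm_add_le _ _).trans ?_
            gcongr
            · exact norm_mul_le _ _
            · calc ‖i * ((1 - c) * b n) * i‖ ≤ ‖i * ((1 - c) * b n)‖ * ‖i‖ := norm_mul_le _ _
                _ ≤ ‖i‖ * ‖(1 - c) * b n‖ * ‖i‖ := by gcongr; exact norm_mul_le _ _
                _ ≤ ‖i‖ * (‖1 - c‖ * ‖b n‖) * ‖i‖ := by gcongr; exact norm_mul_le _ _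
                _ = ‖i‖ * ‖1 - c‖ * ‖i‖ * ‖b n‖ := by ring
          linarith
        calc ‖e n‖ * 2⁻¹ ^ n ≤ (‖(2:ℍ[ℝ])‖ * ‖a n‖ + (‖1 + c‖ + ‖i‖ * ‖1 - c‖ * ‖i‖) * ‖b n‖)
              * 2⁻¹ ^ n := mul_le_mul_of_nonneg_right h1 (by positivity)
          _ = ‖(2 : ℍ[ℝ])‖ * (‖a n‖ * 2⁻¹ ^ n) +
              (‖1 + c‖ + ‖i‖ * ‖1 - c‖ * ‖i‖) * (‖b n‖ * 2⁻¹ ^ n) := by ring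
    · intro x hx
      have hx1 : |x| < 1 := hx.trans (by norm_num)
      have hsa : Summable fun n : ℕ => x ^ n • a n := by
        apply Summable.of_norm
        refine (ha |x| (abs_nonneg x) hx1).congr fun n => ?_
        rw [norm_smul, norm_pow, Real.norm_eq_abs, mul_comm]
      have hsb : Summable fun n : ℕ => x ^ n • b n := by
        apply Summable.of_norm
        refine (hb |x| (abs_nonneg x) hx1).congr fun n => ?_
        rw [norm_smul, norm_pow, Real.norm_eq_abs, mul_comm]
      have hq : ((x : ℍ[ℝ]) + ((0:ℝ) : ℍ[ℝ]) * i) = (x : ℍ[ℝ]) := by simp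
      have hcast : ∀ (v : ℕ → ℍ[ℝ]),
          (∑' n : ℕ, ((x : ℍ[ℝ]) + ((0:ℝ) : ℍ[ℝ]) * i) ^ n * v n)
          = ∑' n : ℕ, x ^ n • v n := by
        intro v
        refine tsum_congr fun n => ?_
        rw [hq, ← Quaternion.coe_pow, Quaternion.coe_mul_eq_smul]
      have hnorm : ‖(x : ℍ[ℝ]) + ((0:ℝ) : ℍ[ℝ]) * i‖ < 1 := by
        rw [hq, Quaternion.norm_coe, Real.norm_eq_abs]
        exact hx1
      have hx' := h x 0 hnorm
      rw [hcast a, hcast b] at hx'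
      set A := ∑' n : ℕ, x ^ n • a n with hA
      set B := ∑' n : ℕ, x ^ n • b n with hB
      have s1 : Summable fun n : ℕ => (2 : ℍ[ℝ]) * (x ^ n • a n) := hsa.mul_left _
      have s2 : Summable fun n : ℕ => (1 + c) * (x ^ n • b n) := hsb.mul_left _
      have s3 : Summable fun n : ℕ => i * ((1 - c) * (x ^ n • b n)) * i :=
        ((hsb.mul_left (1 - c)).mul_left i).mul_right i
      have step1 : (∑' n : ℕ, x ^ n • e n)
          = ∑' n : ℕ, ((2 : ℍ[ℝ]) * (x ^ n • a n)
            - ((1 + c) * (x ^ n • b n) + i * ((1 - c) * (x ^ n • b n)) * i)) := by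
        refine tsum_congr fun n => ?_
        rw [he]
        simp only [smul_sub, smul_add, mul_smul_comm, smul_mul_assoc]
      have step2 : (∑' n : ℕ, ((2 : ℍ[ℝ]) * (x ^ n • a n)
            - ((1 + c) * (x ^ n • b n) + i * ((1 - c) * (x ^ n • b n)) * i)))
          = 2 * A - ((1 + c) * B + i * ((1 - c) * B) * i) := by
        rw [Summable.tsum_sub s1 (s2.add s3), Summable.tsum_add s2 s3]
        congr 1
        · exact hsa.tsum_mul_left 2
        congr 1
        · exact hsb.tsum_mul_left (1 + c)
        · rw [((hsb.mul_left (1 - c)).mul_left i).tsum_mul_right,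
            (hsb.mul_left (1 - c)).tsum_mul_left, hsb.tsum_mul_left]
      rw [step1, step2, hx', sub_self]
  intro n
  have := key n
  rw [he] at this
  simpa [sub_eq_zero] using this

set_option maxHeartbeats 1000000 in
theorem stmt_19 (a b : ℕ → ℍ[ℝ])
    (ha : ∀ r : ℝ, 0 ≤ r → r < 1 → Summable fun n : ℕ => ‖a n‖ * r ^ n)
    (hb : ∀ r : ℝ, 0 ≤ r → r < 1 → Summable fun n : ℕ => ‖b n‖ * r ^ n)
    (hspan : ∀ x : ℍ[ℝ], x.re = 0 →
      x ∈ Submodule.span ℝ (Set.range fun n : ℕ => (b n).im))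
    (i i' j j' : ℍ[ℝ]) (hi : i.re = 0) (hni : ‖i‖ = 1)
    (hi' : i'.re = 0) (hni' : ‖i'‖ = 1) (hne : i ≠ i') (hne' : i ≠ -i')
    (hj : j.re = 0) (hnj : ‖j‖ = 1) (hij : i * j = -(j * i))
    (hj' : j'.re = 0) (hnj' : ‖j'‖ = 1) (hij' : i' * j' = -(j' * i'))
    (c c' : ℍ[ℝ]) (hc : c ∈ Submodule.span ℝ ({1, i} : Set ℍ[ℝ]))
    (hc' : c' ∈ Submodule.span ℝ ({1, i'} : Set ℍ[ℝ]))
    (heq : ∀ x y : ℝ, ‖(x : ℍ[ℝ]) + (y : ℍ[ℝ]) * i‖ < 1 →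
      2 * (∑' n : ℕ, ((x : ℍ[ℝ]) + (y : ℍ[ℝ]) * i) ^ n * a n) =
        (1 + c) * (∑' n : ℕ, ((x : ℍ[ℝ]) + (y : ℍ[ℝ]) * i) ^ n * b n) +
        i * ((1 - c) * (∑' n : ℕ, ((x : ℍ[ℝ]) + (y : ℍ[ℝ]) * i) ^ n * b n)) * i)
    (heq' : ∀ x y : ℝ, ‖(x : ℍ[ℝ]) + (y : ℍ[ℝ]) * i'‖ < 1 →
      2 * (∑' n : ℕ, ((x : ℍ[ℝ]) + (y : ℍ[ℝ]) * i') ^ n * a n) =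
        (1 + c') * (∑' n : ℕ, ((x : ℍ[ℝ]) + (y : ℍ[ℝ]) * i') ^ n * b n) +
        i' * ((1 - c') * (∑' n : ℕ, ((x : ℍ[ℝ]) + (y : ℍ[ℝ]) * i') ^ n * b n)) * i') :
    ∀ q : ℍ[ℝ], ‖q‖ < 1 →
      (∑' n : ℕ, q ^ n * a n) = (∑' n : ℕ, q ^ n * b n) := by
  have two_ne : (2 : ℍ[ℝ]) ≠ 0 := by
    intro h
    have h2 := congrArg QuaternionAlgebra.re h
    rw [show ((2:ℍ[ℝ])) = ((2:ℕ):ℍ[ℝ]) by norm_cast, Quaternion.re_natCast] at h2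
    norm_num at h2
  -- coefficient identities from the two slice hypotheses
  have key : ∀ n, 2 * a n = (1 + c) * b n + i * ((1 - c) * b n) * i :=
    coeff_ident a b ha hb i c heq
  have key' : ∀ n, 2 * a n = (1 + c') * b n + i' * ((1 - c') * b n) * i' :=
    coeff_ident a b ha hb i' c' heq'
  -- the easy cases
  by_cases hc1 : c = 1
  · have hab : ∀ n, a n = b n := by
      intro n
      have h := key n
      rw [hc1] at h
      have h2 : (2 : ℍ[ℝ]) * a n = 2 * b n := by
        rw [h]; norm_num
      exact mul_left_cancel₀ two_ne h2
    intro q _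
    exact tsum_congr fun n => by rw [hab n]
  by_cases hc'1 : c' = 1
  · have hab : ∀ n, a n = b n := by
      intro n
      have h := key' n
      rw [hc'1] at h
      have h2 : (2 : ℍ[ℝ]) * a n = 2 * b n := by
        rw [h]; norm_num
      exact mul_left_cancel₀ two_ne h2
    intro q _
    exact tsum_congr fun n => by rw [hab n]
  exfalso
  -- setup
  have i2 : i * i = -1 := sq_neg_one i hi hni
  have i2' : i' * i' = -1 := sq_neg_one i' hi' hni'
  obtain ⟨s, t, hst⟩ := Submodule.mem_span_pair.mp hc
  obtain ⟨s', t', hst'⟩ := Submodule.mem_span_pair.mp hc'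
  have ci : i * c = c * i := by
    rw [← hst]
    simp only [mul_add, add_mul, mul_smul_comm, smul_mul_assoc, mul_one, one_mul]
  have ci' : i' * c' = c' * i' := by
    rw [← hst']
    simp only [mul_add, add_mul, mul_smul_comm, smul_mul_assoc, mul_one, one_mul]
  have comm : i * (1 - c) = (1 - c) * i := by
    rw [mul_sub, sub_mul, mul_one, one_mul, ci]
  have comm' : i' * (1 - c') = (1 - c') * i' := by
    rw [mul_sub, sub_mul, mul_one, one_mul, ci']
  set u0 : ℝ := 1 - s with hu0
  set u1 : ℝ := -t with hu1def
  set u0' : ℝ := 1 - s' with hu0'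
  set u1' : ℝ := -t' with hu1'def
  have hu01 : (1 : ℍ[ℝ]) - c = u0 • (1 : ℍ[ℝ]) + u1 • i := by
    rw [← hst, hu0, hu1def]; module
  have hu01' : (1 : ℍ[ℝ]) - c' = u0' • (1 : ℍ[ℝ]) + u1' • i' := by
    rw [← hst', hu0', hu1'def]; module
  have hu : (1 : ℍ[ℝ]) - c ≠ 0 := sub_ne_zero.mpr fun h => hc1 h.symm
  have hu' : (1 : ℍ[ℝ]) - c' ≠ 0 := sub_ne_zero.mpr fun h => hc'1 h.symm
  have hN : u0 ^ 2 + u1 ^ 2 ≠ 0 := by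
    intro h
    have h0 : u0 = 0 := by nlinarith [sq_nonneg u0, sq_nonneg u1]
    have h1 : u1 = 0 := by nlinarith [sq_nonneg u0, sq_nonneg u1]
    apply hu; rw [hu01, h0, h1]; simp
  have hN' : u0' ^ 2 + u1' ^ 2 ≠ 0 := by
    intro h
    have h0 : u0' = 0 := by nlinarith [sq_nonneg u0', sq_nonneg u1']
    have h1 : u1' = 0 := by nlinarith [sq_nonneg u0', sq_nonneg u1']
    apply hu'; rw [hu01', h0, h1]; simp
  -- both representations agree
  have hLeq : ∀ n, (1 - c) * (b n - i * b n * i) = (1 - c') * (b n - i' * b n * i') := by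
    intro n
    have h1 := key n
    have h2 := key' n
    have e1 : (1 + c) * b n + i * ((1 - c) * b n) * i
        = 2 * b n - (1 - c) * (b n - i * b n * i) := by
      calc (1 + c) * b n + i * ((1 - c) * b n) * i
          = (1 + c) * b n + (1 - c) * (i * b n * i) := by
            rw [← mul_assoc i (1 - c) (b n), comm]
            noncomm_ring
        _ = 2 * b n - (1 - c) * (b n - i * b n * i) := by noncomm_ring
    have e1' : (1 + c') * b n + i' * ((1 - c') * b n) * i'
        = 2 * b n - (1 - c') * (b n - i' * b n * i') := by
      calc (1 + c') * b n + i' * ((1 - c') * b n) * i'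
          = (1 + c') * b n + (1 - c') * (i' * b n * i') := by
            rw [← mul_assoc i' (1 - c') (b n), comm']
            noncomm_ring
        _ = 2 * b n - (1 - c') * (b n - i' * b n * i') := by noncomm_ring
    rw [e1] at h1
    rw [e1'] at h2
    have h3 : 2 * b n - (1 - c) * (b n - i * b n * i)
        = 2 * b n - (1 - c') * (b n - i' * b n * i') := by rw [← h1, ← h2]
    exact sub_right_injective h3
  -- commutation of L with i and i'
  have hcommL : ∀ n, i * ((1 - c) * (b n - i * b n * i))
      = ((1 - c) * (b n - i * b n * i)) * i := by
    intro n
    have l1 : i * (b n - i * b n * i) = i * b n + b n * i := by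
      rw [mul_sub, show i * (i * b n * i) = (i * i) * (b n * i) by noncomm_ring, i2]
      noncomm_ring
    have l2 : (b n - i * b n * i) * i = i * b n + b n * i := by
      rw [sub_mul, show (i * b n * i) * i = (i * b n) * (i * i) by noncomm_ring, i2]
      noncomm_ring
    rw [← mul_assoc, comm, mul_assoc, l1, ← l2, ← mul_assoc]
  have hcommL' : ∀ n, i' * ((1 - c') * (b n - i' * b n * i'))
      = ((1 - c') * (b n - i' * b n * i')) * i' := by
    intro n
    have l1 : i' * (b n - i' * b n * i') = i' * b n + b n * i' := by
      rw [mul_sub, show i' * (i' * b n * i') = (i' * i') * (b n * i') by noncomm_ring, i2']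
      noncomm_ring
    have l2 : (b n - i' * b n * i') * i' = i' * b n + b n * i' := by
      rw [sub_mul, show (i' * b n * i') * i' = (i' * b n) * (i' * i') by noncomm_ring, i2']
      noncomm_ring
    rw [← mul_assoc, comm', mul_assoc, l1, ← l2, ← mul_assoc]
  -- L is real
  have hLreal : ∀ n, (1 - c) * (b n - i * b n * i)
      = ((((1 - c) * (b n - i * b n * i)).re : ℝ) : ℍ[ℝ]) := by
    intro n
    set L := (1 - c) * (b n - i * b n * i) with hL
    have hcomm2 : i' * L = L * i' := by
      rw [hL, hLeq n]; exact hcommL' n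
    have d1 := comm_lemma i L hi hni (hcommL n)
    have d2 := comm_lemma i' L hi' hni' hcomm2
    have h3 : (L.imI * i.imI + L.imJ * i.imJ + L.imK * i.imK) • i
        = (L.imI * i'.imI + L.imJ * i'.imJ + L.imK * i'.imK) • i' := by
      have := d1.symm.trans d2
      exact add_left_cancel this
    obtain ⟨hz, _⟩ := lin_indep i i' hni hni' hne hne' _ _ h3
    rw [hz, zero_smul, add_zero] at d1
    exact d1
  -- scalar equations
  have hscal : ∀ n, (u0 ^ 2 + u1 ^ 2) * (2 * (b n * i).re)
      = ((1 - c) * (b n - i * b n * i)).re * u1 := by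
    intro n
    set β := b n - i * b n * i with hβ
    set ρ : ℝ := ((1 - c) * β).re with hρ
    set w : ℍ[ℝ] := u0 • (1 : ℍ[ℝ]) - u1 • i with hw
    have hwu : w * (1 - c) = ((u0 ^ 2 + u1 ^ 2 : ℝ)) • (1 : ℍ[ℝ]) := by
      rw [hw, hu01]
      simp only [sub_mul, mul_add, smul_mul_assoc, mul_smul_comm, one_mul, mul_one, i2,
        smul_smul]
      module
    have h5 : ((u0 ^ 2 + u1 ^ 2 : ℝ)) • β = ρ • w := by
      have h6 := congrArg (fun z => w * z) (hLreal n)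
      rw [← mul_assoc, hwu, smul_mul_assoc, one_mul, Quaternion.mul_coe_eq_smul] at h6
      exact h6
    have h7 := congrArg (fun z => (z * i).re) h5
    rw [smul_mul_assoc, smul_mul_assoc] at h7
    have h8 : ((u0 ^ 2 + u1 ^ 2 : ℝ) • (β * i)).re = (u0 ^ 2 + u1 ^ 2) * (β * i).re := by
      rw [Quaternion.re_smul]; rfl
    have h9 : (ρ • (w * i)).re = ρ * (w * i).re := by
      rw [Quaternion.re_smul]; rfl
    rw [h8, h9] at h7
    have h10 : (w * i).re = u1 := by
      rw [hw, sub_mul, smul_mul_assoc, smul_mul_assoc, one_mul, i2]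
      simp [hi]
    have h11 : (β * i).re = 2 * (b n * i).re := by
      rw [hβ, sub_mul, show (i * b n * i) * i = (i * b n) * (i * i) by noncomm_ring, i2]
      have hre : (i * b n).re = (b n * i).re := re_mul_comm i (b n)
      rw [mul_neg_one, sub_neg_eq_add, Quaternion.re_add, hre]
      ring
    rw [h10, h11] at h7
    exact h7
  have hscal' : ∀ n, (u0' ^ 2 + u1' ^ 2) * (2 * (b n * i').re)
      = ((1 - c) * (b n - i * b n * i)).re * u1' := by
    intro n
    set β := b n - i' * b n * i' with hβ
    set ρ : ℝ := ((1 - c) * (b n - i * b n * i)).re with hρ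
    have hρ' : (1 - c') * β = ((ρ : ℝ) : ℍ[ℝ]) := by
      rw [hβ, ← hLeq n]; exact hLreal n
    set w : ℍ[ℝ] := u0' • (1 : ℍ[ℝ]) - u1' • i' with hw
    have hwu : w * (1 - c') = ((u0' ^ 2 + u1' ^ 2 : ℝ)) • (1 : ℍ[ℝ]) := by
      rw [hw, hu01']
      simp only [sub_mul, mul_add, smul_mul_assoc, mul_smul_comm, one_mul, mul_one, i2',
        smul_smul]
      module
    have h5 : ((u0' ^ 2 + u1' ^ 2 : ℝ)) • β = ρ • w := by
      have h6 := congrArg (fun z => w * z) hρ'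
      rw [← mul_assoc, hwu, smul_mul_assoc, one_mul, Quaternion.mul_coe_eq_smul] at h6
      exact h6
    have h7 := congrArg (fun z => (z * i').re) h5
    rw [smul_mul_assoc, smul_mul_assoc] at h7
    have h8 : ((u0' ^ 2 + u1' ^ 2 : ℝ) • (β * i')).re
        = (u0' ^ 2 + u1' ^ 2) * (β * i').re := by
      rw [Quaternion.re_smul]; rfl
    have h9 : (ρ • (w * i')).re = ρ * (w * i').re := by
      rw [Quaternion.re_smul]; rfl
    rw [h8, h9] at h7
    have h10 : (w * i').re = u1' := by
      rw [hw, sub_mul, smul_mul_assoc, smul_mul_assoc, one_mul, i2']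
      simp [hi']
    have h11 : (β * i').re = 2 * (b n * i').re := by
      rw [hβ, sub_mul, show (i' * b n * i') * i' = (i' * b n) * (i' * i') by noncomm_ring, i2']
      have hre : (i' * b n).re = (b n * i').re := re_mul_comm i' (b n)
      rw [mul_neg_one, sub_neg_eq_add, Quaternion.re_add, hre]
      ring
    rw [h10, h11] at h7
    exact h7
  have hi0 : i ≠ 0 := by intro h; rw [h] at hni; simp at hni
  -- final case analysis
  by_cases hu1 : u1 = 0
  · apply kill b hspan i hi hi0
    intro n
    have h := hscal n
    have hX : (u0 ^ 2 + u1 ^ 2) * (2 * (b n * i).re) = 0 := by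
      rw [h, hu1, mul_zero]
    rcases mul_eq_zero.mp hX with h' | h'
    · exact absurd h' hN
    · linarith
  · apply kill b hspan (((u0 ^ 2 + u1 ^ 2) * u1') • i - ((u0' ^ 2 + u1' ^ 2) * u1) • i')
    · rw [Quaternion.re_sub, Quaternion.re_smul, Quaternion.re_smul, hi, hi']
      simp
    · intro h0
      rw [sub_eq_zero] at h0
      obtain ⟨_, h2⟩ := lin_indep i i' hni hni' hne hne' _ _ h0
      rcases mul_eq_zero.mp h2 with h | h
      · exact hN' h
      · exact hu1 h
    · intro n
      have e1 := hscal n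
      have e2 := hscal' n
      have hexp : (b n * (((u0 ^ 2 + u1 ^ 2) * u1') • i
          - ((u0' ^ 2 + u1' ^ 2) * u1) • i')).re
          = (u0 ^ 2 + u1 ^ 2) * u1' * (b n * i).re
            - (u0' ^ 2 + u1' ^ 2) * u1 * (b n * i').re := by
        rw [mul_sub, mul_smul_comm, mul_smul_comm, Quaternion.re_sub,
          Quaternion.re_smul, Quaternion.re_smul]
        rfl
      rw [hexp]
      linear_combination (u1' / 2) * e1 - (u1 / 2) * e2
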